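/- Let p be an odd prime, n an integer with gcd(n,p)=1, and χ a non-principal Dirichlet character modulo p. Then |G(n,χ;p)|² = (1 + χ(-1))·p + (n/p)·G(1;p) · ∑_{a=2}^{p-2} χ(a) · ((a²-1)/p), where (·/p) is the Legendre symbol, G(n,χ;p) = ∑_{a=1}^{p-1} χ(a) e^{2πi n a²/p}, and G(1;p) = ∑_{b=0}^{p-1} e^{2πi b²/p}. -/

import Mathlib

open Complex Finset ZMod

noncomputable def Phi (p : ℕ) [Fact p.Prime] : MulChar (ZMod p) ℂ :=
  (quadraticChar (ZMod p)).ringHomComp (Int.castRingHom ℂ)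

section helpers
variable {p : ℕ} [Fact p.Prime]

lemma psi_exp (n : ℤ) (a : ZMod p) :
    Complex.exp (2 * Real.pi * I * n * (a.val : ℂ) ^ 2 / p)
      = ZMod.stdAddChar ((n : ZMod p) * a ^ 2) := by
  have h : ((n * (a.val : ℤ) ^ 2 : ℤ) : ZMod p) = (n : ZMod p) * a ^ 2 := by
    haveI : NeZero p := ⟨(Fact.out (p := p.Prime)).pos.ne'⟩
    push_cast [ZMod.natCast_zmod_val]
    ring
  rw [← h, ZMod.stdAddChar_coe]
  push_cast
  ring_nf

lemma conj_psi (x : ZMod p) :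
    (starRingEnd ℂ) (ZMod.stdAddChar x) = ZMod.stdAddChar (-x) := by
  have h1 : ZMod.stdAddChar x * ZMod.stdAddChar (-x) = 1 := by
    rw [← AddChar.map_add_eq_mul, add_neg_cancel, AddChar.map_zero_eq_one]
  have h2 : ‖(ZMod.stdAddChar x : ℂ)‖ = 1 := by
    rw [ZMod.stdAddChar_apply]
    exact Circle.norm_coe _
  have h3 : (starRingEnd ℂ) (ZMod.stdAddChar x) * ZMod.stdAddChar x = 1 := by
    rw [mul_comm, Complex.mul_conj, Complex.normSq_eq_norm_sq, h2]
    norm_num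
  calc (starRingEnd ℂ) (ZMod.stdAddChar x)
      = (starRingEnd ℂ) (ZMod.stdAddChar x) * (ZMod.stdAddChar x * ZMod.stdAddChar (-x)) := by
        rw [h1, mul_one]
    _ = ZMod.stdAddChar (-x) := by rw [← mul_assoc, h3, one_mul]

lemma chi_mul_conj (χ : DirichletCharacter ℂ p) {b : ZMod p} (hb : b ≠ 0) :
    χ b * (starRingEnd ℂ) (χ b) = 1 := by
  have hpow : (χ b) ^ (p - 1) = 1 := by
    rw [← map_pow, ZMod.pow_card_sub_one_eq_one hb, map_one]
  have habs : ‖χ b‖ = 1 :=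
    Complex.norm_eq_one_of_pow_eq_one hpow
      (by have := (Fact.out (p := p.Prime)).two_le; omega)
  rw [Complex.mul_conj, Complex.normSq_eq_norm_sq, habs]
  norm_num

lemma sum_range_zmod [NeZero p] (f : ZMod p → ℂ) :
    ∑ i ∈ Finset.range p, f i = ∑ c : ZMod p, f c := by
  refine Finset.sum_nbij' (fun i => (i : ZMod p)) (fun c => c.val) ?_ ?_ ?_ ?_ ?_
  · intro a _; exact mem_univ _
  · intro c _; exact mem_range.mpr (ZMod.val_lt c)
  · intro a ha; exact ZMod.val_cast_of_lt (mem_range.mp ha)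
  · intro c _; exact ZMod.natCast_zmod_val c
  · intro a _; rfl

lemma sum_psi_sq (hp2 : p ≠ 2) (k : ZMod p) :
    ∑ b : ZMod p, ZMod.stdAddChar (k * b ^ 2)
      = ∑ t : ZMod p, ((Phi p t) + 1) * ZMod.stdAddChar (k * t) := by
  rw [← Finset.sum_fiberwise' Finset.univ (fun b : ZMod p => b ^ 2)
      (fun t => ZMod.stdAddChar (k * t))]
  refine Finset.sum_congr rfl fun t _ => ?_
  rw [Finset.sum_const, nsmul_eq_mul]
  congr 1
  have hcard := quadraticChar_card_sqrts ((ZMod.ringChar_zmod_n p).substr hp2) t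
  rw [Set.toFinset_setOf] at hcard
  calc ((Finset.univ.filter (fun b : ZMod p => b ^ 2 = t)).card : ℂ)
      = (((Finset.univ.filter (fun b : ZMod p => b ^ 2 = t)).card : ℤ) : ℂ) := by push_cast; rfl
    _ = ((quadraticChar (ZMod p) t + 1 : ℤ) : ℂ) := by rw [hcard]
    _ = Phi p t + 1 := by push_cast; rfl

lemma expand_sum (hp2 : p ≠ 2) (k : ZMod p) :
    ∑ b : ZMod p, ZMod.stdAddChar (k * b ^ 2)
      = (∑ t : ZMod p, Phi p t * ZMod.stdAddChar (k * t))
        + ∑ t : ZMod p, ZMod.stdAddChar (t * k) := by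
  rw [sum_psi_sq hp2 k, ← Finset.sum_add_distrib]
  refine Finset.sum_congr rfl fun t _ => ?_
  rw [mul_comm t k]; ring

lemma quad_sum (hp2 : p ≠ 2) {k : ZMod p} (hk : k ≠ 0) :
    ∑ b : ZMod p, ZMod.stdAddChar (k * b ^ 2)
      = Phi p k * ∑ b : ZMod p, ZMod.stdAddChar (b ^ 2) := by
  have hzero : ∀ (k : ZMod p), k ≠ 0 → ∑ t : ZMod p, ZMod.stdAddChar (t * k) = 0 := by
    intro k hk
    rw [AddChar.sum_mulShift k (ZMod.isPrimitive_stdAddChar p), if_neg hk]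
    norm_num
  have hku : IsUnit k := Ne.isUnit hk
  have hshift : Phi p k * ∑ t : ZMod p, Phi p t * ZMod.stdAddChar (k * t)
      = ∑ t : ZMod p, Phi p t * ZMod.stdAddChar t := by
    have h := gaussSum_mulShift (Phi p) ZMod.stdAddChar hku.unit
    rw [gaussSum, gaussSum] at h
    rw [← h]
    simp only [AddChar.mulShift_apply, IsUnit.unit_spec]
  have hsq : Phi p k * Phi p k = 1 := by
    have h2 := quadraticChar_sq_one (F := ZMod p) hk
    calc Phi p k * Phi p k = ((quadraticChar (ZMod p) k ^ 2 : ℤ) : ℂ) := by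
          simp [Phi, MulChar.ringHomComp]; push_cast; ring
      _ = 1 := by rw [h2]; norm_num
  have hmain : ∑ t : ZMod p, Phi p t * ZMod.stdAddChar (k * t)
      = Phi p k * ∑ t : ZMod p, Phi p t * ZMod.stdAddChar t := by
    calc ∑ t : ZMod p, Phi p t * ZMod.stdAddChar (k * t)
        = (Phi p k * Phi p k) * ∑ t : ZMod p, Phi p t * ZMod.stdAddChar (k * t) := by
          rw [hsq, one_mul]
      _ = Phi p k * (Phi p k * ∑ t : ZMod p, Phi p t * ZMod.stdAddChar (k * t)) := by ring
      _ = Phi p k * ∑ t : ZMod p, Phi p t * ZMod.stdAddChar t := by rw [hshift]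
  have hg : ∑ b : ZMod p, ZMod.stdAddChar (b ^ 2)
      = ∑ t : ZMod p, Phi p t * ZMod.stdAddChar t := by
    have h := expand_sum hp2 1
    simp only [one_mul] at h
    rw [h, hzero 1 one_ne_zero, add_zero]
  rw [expand_sum hp2 k, hzero k hk, add_zero, hmain, hg]

lemma g2_sum :
    ∑ b ∈ Finset.range p, Complex.exp (2 * Real.pi * I * (b : ℂ) ^ 2 / p)
      = ∑ b : ZMod p, ZMod.stdAddChar (b ^ 2) := by
  haveI : NeZero p := ⟨(Fact.out (p := p.Prime)).pos.ne'⟩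
  rw [← sum_range_zmod (fun c : ZMod p => ZMod.stdAddChar (c ^ 2))]
  refine Finset.sum_congr rfl fun i _ => ?_
  have h : (((i : ℤ) ^ 2 : ℤ) : ZMod p) = ((i : ZMod p)) ^ 2 := by push_cast; ring
  rw [← h, ZMod.stdAddChar_coe]
  push_cast
  ring_nf

lemma phi_leg (x : ℤ) : ((legendreSym p x : ℤ) : ℂ) = Phi p ((x : ZMod p)) := rfl

lemma icc_sum (hp2 : p ≠ 2) (χ : DirichletCharacter ℂ p) :
    ∑ a ∈ Finset.Icc 2 (p - 2), χ (a : ZMod p) * (legendreSym p ((a : ℤ) ^ 2 - 1) : ℂ)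
      = ∑ c : ZMod p, χ c * Phi p (c ^ 2 - 1) := by
  haveI : NeZero p := ⟨(Fact.out (p := p.Prime)).pos.ne'⟩
  have hp3 : 3 ≤ p := by
    have := (Fact.out (p := p.Prime)).two_le
    rcases Nat.lt_or_ge p 3 with h | h
    · interval_cases p <;> simp_all
    · exact h
  have hterm : ∀ a : ℕ, χ (a : ZMod p) * (legendreSym p ((a : ℤ) ^ 2 - 1) : ℂ)
      = χ (a : ZMod p) * Phi p (((a : ZMod p)) ^ 2 - 1) := by
    intro a
    rw [phi_leg]
    congr 2
    push_cast
    ring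
  calc ∑ a ∈ Finset.Icc 2 (p - 2), χ (a : ZMod p) * (legendreSym p ((a : ℤ) ^ 2 - 1) : ℂ)
      = ∑ a ∈ Finset.Icc 2 (p - 2), χ (a : ZMod p) * Phi p (((a : ZMod p)) ^ 2 - 1) := by
        exact Finset.sum_congr rfl fun a _ => hterm a
    _ = ∑ a ∈ Finset.range p, χ (a : ZMod p) * Phi p (((a : ZMod p)) ^ 2 - 1) := by
        refine Finset.sum_subset ?_ ?_
        · intro a ha
          rw [mem_Icc] at ha
          exact mem_range.mpr (by omega)
        · intro a ha hna
          rw [mem_range] at ha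
          rw [mem_Icc] at hna
          have : a = 0 ∨ a = 1 ∨ a = p - 1 := by omega
          rcases this with h | h | h
          · subst h
            have h0 : ((0 : ℕ) : ZMod p) = 0 := by norm_num
            rw [h0, MulChar.map_zero, zero_mul]
          · subst h
            have h1 : ((1 : ℕ) : ZMod p) = 1 := by norm_num
            rw [h1]
            have : ((1 : ZMod p)) ^ 2 - 1 = 0 := by ring
            rw [this, MulChar.map_zero, mul_zero]
          · subst h
            have h1 : ((p - 1 : ℕ) : ZMod p) = -1 := by
              rw [Nat.cast_sub (by omega)]
              simp
            rw [h1]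
            have : ((-1 : ZMod p)) ^ 2 - 1 = 0 := by ring
            rw [this, MulChar.map_zero, mul_zero]
    _ = ∑ c : ZMod p, χ c * Phi p (c ^ 2 - 1) :=
        sum_range_zmod (fun c : ZMod p => χ c * Phi p (c ^ 2 - 1))

end helpers

theorem gauss_sum_sq_abs (p : ℕ) [Fact p.Prime] (hp2 : p ≠ 2)
    (n : ℤ) (hn : Int.gcd n p = 1)
    (χ : DirichletCharacter ℂ p) (hχ : χ ≠ 1) :
    (‖∑ a : ZMod p, χ a *
        Complex.exp (2 * Real.pi * I * n * (a.val : ℂ) ^ 2 / p)‖ : ℂ) ^ 2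
      = (1 + χ (-1)) * p +
        (legendreSym p n : ℂ) *
          (∑ b ∈ Finset.range p, Complex.exp (2 * Real.pi * I * (b : ℂ) ^ 2 / p)) *
          ∑ a ∈ Finset.Icc 2 (p - 2), χ (a : ZMod p) * (legendreSym p ((a : ℤ) ^ 2 - 1) : ℂ) := by
  haveI : NeZero p := ⟨(Fact.out (p := p.Prime)).pos.ne'⟩
  have hp3 : 3 ≤ p := by
    have := (Fact.out (p := p.Prime)).two_le
    rcases Nat.lt_or_ge p 3 with h | h
    · interval_cases p <;> simp_all
    · exact h
  set m : ZMod p := (n : ZMod p) with hm_def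
  have hm : m ≠ 0 := by
    rw [hm_def, Ne, ZMod.intCast_zmod_eq_zero_iff_dvd]
    intro hdvd
    have hcop : IsCoprime n (p : ℤ) := Int.isCoprime_iff_gcd_eq_one.mpr hn
    have := hcop.isUnit_of_dvd' hdvd dvd_rfl
    rw [Int.isUnit_iff] at this
    omega
  set ψ : AddChar (ZMod p) ℂ := ZMod.stdAddChar with hψ_def
  set G : ℂ := ∑ a : ZMod p, χ a * Complex.exp (2 * Real.pi * I * n * ((a.val : ℂ)) ^ 2 / p)
    with hG_def
  set g₂ : ℂ := ∑ b : ZMod p, ψ (b ^ 2) with hg2_def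
  have hG : G = ∑ a : ZMod p, χ a * ψ (m * a ^ 2) := by
    rw [hG_def]
    exact Finset.sum_congr rfl fun a _ => by rw [psi_exp n a]
  have hconjG : (starRingEnd ℂ) G = ∑ b : ZMod p, (starRingEnd ℂ) (χ b) * ψ (-(m * b ^ 2)) := by
    rw [hG, map_sum]
    exact Finset.sum_congr rfl fun b _ => by rw [map_mul, conj_psi]
  have habs : ((‖G‖ : ℂ)) ^ 2 = G * (starRingEnd ℂ) G := by
    rw [← Complex.ofReal_pow, Complex.sq_norm, Complex.mul_conj]
  -- inner sum computation
  have hinner : ∀ b : ZMod p,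
      ((starRingEnd ℂ) (χ b) * ψ (-(m * b ^ 2))) * G
        = ∑ c : ZMod p, (if b = 0 then 0 else χ c * ψ (m * b ^ 2 * (c ^ 2 - 1))) := by
    intro b
    by_cases hb : b = 0
    · subst hb
      rw [MulChar.map_zero, map_zero, zero_mul, zero_mul]
      simp
    · simp only [if_neg hb]
      rw [hG, Finset.mul_sum]
      refine (Fintype.sum_equiv (Equiv.mulLeft₀ b hb)
        (fun c : ZMod p => χ c * ψ (m * b ^ 2 * (c ^ 2 - 1)))
        (fun a : ZMod p => (starRingEnd ℂ) (χ b) * ψ (-(m * b ^ 2)) * (χ a * ψ (m * a ^ 2)))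
        (fun c => ?_)).symm
      show χ c * ψ (m * b ^ 2 * (c ^ 2 - 1))
        = (starRingEnd ℂ) (χ b) * ψ (-(m * b ^ 2)) * (χ (b * c) * ψ (m * (b * c) ^ 2))
      refine Eq.symm ?_
      rw [map_mul χ b c]
      calc (starRingEnd ℂ) (χ b) * ψ (-(m * b ^ 2)) * (χ b * χ c * ψ (m * (b * c) ^ 2))
          = (χ b * (starRingEnd ℂ) (χ b)) * χ c * (ψ (-(m * b ^ 2)) * ψ (m * (b * c) ^ 2)) := by
            ring
        _ = χ c * ψ (m * b ^ 2 * (c ^ 2 - 1)) := by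
            rw [chi_mul_conj χ hb, one_mul, ← AddChar.map_add_eq_mul]
            congr 1
            ring
  have hsplit : ∀ g : ZMod p → ℂ,
      (∑ b : ZMod p, if b = 0 then 0 else g b) = (∑ b : ZMod p, g b) - g 0 := by
    intro g
    have h : ∀ b : ZMod p, (if b = 0 then (0 : ℂ) else g b)
        = g b - (if b = 0 then g b else 0) := by
      intro b; by_cases hb : b = 0 <;> simp [hb]
    simp_rw [h]
    rw [Finset.sum_sub_distrib, Finset.sum_ite_eq' Finset.univ (0 : ZMod p) g,
      if_pos (mem_univ _)]
  have hQ : ∀ c : ZMod p,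
      (∑ b : ZMod p, if b = 0 then 0 else χ c * ψ (m * b ^ 2 * (c ^ 2 - 1)))
        = χ c * ((if c ^ 2 = 1 then (p : ℂ) else Phi p m * Phi p (c ^ 2 - 1) * g₂) - 1) := by
    intro c
    rw [hsplit (fun b => χ c * ψ (m * b ^ 2 * (c ^ 2 - 1)))]
    have h0 : ψ (m * (0 : ZMod p) ^ 2 * (c ^ 2 - 1)) = 1 := by
      norm_num
    rw [h0]
    rw [← Finset.mul_sum, ← mul_sub]
    congr 2
    have hre : ∀ b : ZMod p, m * b ^ 2 * (c ^ 2 - 1) = (m * (c ^ 2 - 1)) * b ^ 2 := by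
      intro b; ring
    simp_rw [hre]
    by_cases hc : c ^ 2 = 1
    · rw [if_pos hc]
      have : m * (c ^ 2 - 1) = 0 := by rw [hc]; ring
      rw [this]
      simp only [zero_mul, AddChar.map_zero_eq_one]
      rw [Finset.sum_const, Finset.card_univ, ZMod.card, nsmul_eq_mul, mul_one]
    · rw [if_neg hc]
      have hk : m * (c ^ 2 - 1) ≠ 0 := by
        refine mul_ne_zero hm (fun h => hc ?_)
        have := sub_eq_zero.mp h
        exact this
      rw [quad_sum hp2 hk, map_mul]
  -- per-c decomposition
  have hpoint : ∀ c : ZMod p,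
      χ c * ((if c ^ 2 = 1 then (p : ℂ) else Phi p m * Phi p (c ^ 2 - 1) * g₂) - 1)
        = Phi p m * g₂ * (χ c * Phi p (c ^ 2 - 1)) - χ c
          + (if c = 1 then (p : ℂ) else 0) + (if c = -1 then (p : ℂ) * χ (-1) else 0) := by
    intro c
    haveI : Fact (2 < p) := ⟨by omega⟩
    have hne : (1 : ZMod p) ≠ -1 := fun h => ZMod.neg_one_ne_one (n := p) h.symm
    by_cases hc : c ^ 2 = 1
    · have hcc : c = 1 ∨ c = -1 := by
        have h2 : c * c = 1 := by rw [← pow_two]; exact hc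
        rcases mul_self_eq_one_iff.mp h2 with h | h
        · exact Or.inl h
        · exact Or.inr h
      have hzero : Phi p (c ^ 2 - 1) = 0 := by
        rw [hc, sub_self, MulChar.map_zero]
      rcases hcc with h | h <;> subst h
      · rw [if_pos hc, if_pos rfl, if_neg (fun h => hne h), hzero]
        rw [map_one]
        ring
      · rw [if_pos hc, if_neg (fun h => hne h.symm), if_pos rfl, hzero]
        ring
    · have hc1 : c ≠ 1 := fun h => hc (by rw [h]; ring)
      have hc2 : c ≠ -1 := fun h => hc (by rw [h]; ring)
      rw [if_neg hc, if_neg hc1, if_neg hc2]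
      ring
  -- assemble
  have hsumchi : ∑ c : ZMod p, χ c = 0 := MulChar.sum_eq_zero_of_ne_one hχ
  have key : G * (starRingEnd ℂ) G
      = (1 + χ (-1)) * p + Phi p m * g₂ * (∑ c : ZMod p, χ c * Phi p (c ^ 2 - 1)) := by
    calc G * (starRingEnd ℂ) G
        = (starRingEnd ℂ) G * G := mul_comm _ _
      _ = ∑ b : ZMod p, ((starRingEnd ℂ) (χ b) * ψ (-(m * b ^ 2))) * G := by
          rw [hconjG, Finset.sum_mul]
      _ = ∑ b : ZMod p, ∑ c : ZMod p,
            (if b = 0 then 0 else χ c * ψ (m * b ^ 2 * (c ^ 2 - 1))) := by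
          exact Finset.sum_congr rfl fun b _ => hinner b
      _ = ∑ c : ZMod p, ∑ b : ZMod p,
            (if b = 0 then 0 else χ c * ψ (m * b ^ 2 * (c ^ 2 - 1))) := Finset.sum_comm
      _ = ∑ c : ZMod p, (Phi p m * g₂ * (χ c * Phi p (c ^ 2 - 1)) - χ c
          + (if c = 1 then (p : ℂ) else 0) + (if c = -1 then (p : ℂ) * χ (-1) else 0)) := by
          exact Finset.sum_congr rfl fun c _ => by rw [hQ c, hpoint c]
      _ = (∑ c : ZMod p, Phi p m * g₂ * (χ c * Phi p (c ^ 2 - 1)))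
            - (∑ c : ZMod p, χ c)
            + (∑ c : ZMod p, if c = 1 then (p : ℂ) else 0)
            + (∑ c : ZMod p, if c = -1 then (p : ℂ) * χ (-1) else 0) := by
          rw [Finset.sum_add_distrib, Finset.sum_add_distrib, Finset.sum_sub_distrib]
      _ = (1 + χ (-1)) * p + Phi p m * g₂ * (∑ c : ZMod p, χ c * Phi p (c ^ 2 - 1)) := by
          rw [hsumchi, ← Finset.mul_sum]
          rw [Finset.sum_ite_eq' Finset.univ (1 : ZMod p) (fun _ => (p : ℂ)),
            Finset.sum_ite_eq' Finset.univ (-1 : ZMod p) (fun _ => (p : ℂ) * χ (-1)),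
            if_pos (mem_univ _), if_pos (mem_univ _)]
          ring
  rw [habs, key, icc_sum hp2 χ, g2_sum, ← phi_leg n]
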